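/- In the symmetric group S₃, the elements g₁ = g₂ = (12), g₃ = g₄ = (13), g₅ = g₆ = (23) generate S₃ and satisfy g₁g₂g₃g₄g₅g₆ = 1; the elements h₁ = (12), h₂ = (123), ℓ₁ = (132) satisfy ℓ₁[h₁,h₂] = 1 and generate S₃; and the union of all conjugates of the subgroups ⟨gᵢ⟩ intersects the union of all conjugates of ⟨ℓ₁⟩ trivially (i.e., only in the identity). -/

import Mathlib

open Equiv
open scoped commutatorElement

/-- Building data for the example `G = S₃`, `g(C) = 3`, `g(F) = 4`:
with `g₁ = g₂ = (12)`, `g₃ = g₄ = (13)`, `g₅ = g₆ = (23)` (0-indexed),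
`h₁ = (12)`, `h₂ = (123)`, `ℓ₁ = (132)`, the `gᵢ` generate `S₃` and have
product 1; `ℓ₁ ⁅h₁,h₂⁆ = 1` and `ℓ₁, h₁, h₂` generate `S₃`; and the union of
all conjugates of the `⟨gᵢ⟩` meets the union of all conjugates of `⟨ℓ₁⟩` only
in the identity. -/
theorem stmt_15 :
    let g₁ : Perm (Fin 3) := c[0, 1]
    let g₃ : Perm (Fin 3) := c[0, 2]
    let g₅ : Perm (Fin 3) := c[1, 2]
    let h₁ : Perm (Fin 3) := c[0, 1]
    let h₂ : Perm (Fin 3) := c[0, 1, 2]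
    let ℓ₁ : Perm (Fin 3) := c[0, 2, 1]
    Subgroup.closure ({g₁, g₃, g₅} : Set (Perm (Fin 3))) = ⊤ ∧
    g₁ * g₁ * g₃ * g₃ * g₅ * g₅ = 1 ∧
    ℓ₁ * ⁅h₁, h₂⁆ = 1 ∧
    Subgroup.closure ({ℓ₁, h₁, h₂} : Set (Perm (Fin 3))) = ⊤ ∧
    ∀ x : Perm (Fin 3),
      (∃ (k : Perm (Fin 3)) (g : Perm (Fin 3)), g ∈ ({g₁, g₃, g₅} : Set (Perm (Fin 3))) ∧
        x ∈ Subgroup.zpowers (k * g * k⁻¹)) →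
      (∃ k : Perm (Fin 3), x ∈ Subgroup.zpowers (k * ℓ₁ * k⁻¹)) →
      x = 1 := by
  intro g₁ g₃ g₅ h₁ h₂ ℓ₁
  have key : ∀ S : Subgroup (Perm (Fin 3)), g₁ ∈ S → g₃ ∈ S → g₅ ∈ S → S = ⊤ := by
    intro S h1 h3 h5
    rw [eq_top_iff, ← Equiv.Perm.closure_isSwap, Subgroup.closure_le]
    intro σ hσ
    have : σ = g₁ ∨ σ = g₃ ∨ σ = g₅ := by
      obtain ⟨x, y, hxy, rfl⟩ := hσ
      simp only [g₁, g₃, g₅]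
      revert hxy; fin_cases x <;> fin_cases y <;> decide
    rcases this with rfl | rfl | rfl <;> assumption
  refine ⟨?_, ?_, ?_, ?_, ?_⟩
  · exact key _ (Subgroup.subset_closure (by simp)) (Subgroup.subset_closure (by simp))
      (Subgroup.subset_closure (by simp))
  · decide
  · decide
  · have m1 : h₁ ∈ Subgroup.closure ({ℓ₁, h₁, h₂} : Set (Perm (Fin 3))) :=
      Subgroup.subset_closure (by simp)
    have m2 : h₂ ∈ Subgroup.closure ({ℓ₁, h₁, h₂} : Set (Perm (Fin 3))) :=
      Subgroup.subset_closure (by simp)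
    have e3 : g₃ = h₂ * h₁ * h₂⁻¹ ∨ g₃ = h₂⁻¹ * h₁ * h₂ := by decide
    have e5 : g₅ = h₂ * h₁ * h₂⁻¹ ∨ g₅ = h₂⁻¹ * h₁ * h₂ := by decide
    apply key
    · exact m1
    · rcases e3 with h | h <;> rw [h] <;>
        exact mul_mem (mul_mem (by first | exact m2 | exact inv_mem m2) m1)
          (by first | exact m2 | exact inv_mem m2)
    · rcases e5 with h | h <;> rw [h] <;>
        exact mul_mem (mul_mem (by first | exact m2 | exact inv_mem m2) m1)
          (by first | exact m2 | exact inv_mem m2)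
  · rintro x ⟨k, g, hg, hx⟩ ⟨k', hx'⟩
    have hg2 : g ^ 2 = 1 := by
      rcases hg with rfl | rfl | rfl <;> simp only [g₁, g₃, g₅] <;> decide
    have hl3 : ℓ₁ ^ 3 = 1 := by simp only [ℓ₁]; decide
    have hc2 : (k * g * k⁻¹) ^ 2 = 1 := by
      rw [conj_pow, hg2]; group
    have hc3 : (k' * ℓ₁ * k'⁻¹) ^ 3 = 1 := by
      rw [conj_pow, hl3]; group
    have h2 : orderOf x ∣ 2 :=
      (orderOf_dvd_of_mem_zpowers hx).trans (orderOf_dvd_of_pow_eq_one hc2)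
    have h3 : orderOf x ∣ 3 :=
      (orderOf_dvd_of_mem_zpowers hx').trans (orderOf_dvd_of_pow_eq_one hc3)
    have := Nat.dvd_gcd h2 h3
    norm_num at this
    exact this
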